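/- Suppose μ₀ has the fixed-point property with respect to V and r, and the branches of r⁻¹ can be labeled measurably. Then there exists a nonnegative measurable function Δ on X such that for every f ∈ L¹(X, μ₀), (R_{μ₀}(V f))(x) = ∑_{y : r(y)=x} Δ(y) f(y) for μ₀-a.e. x. -/

import Mathlib

open MeasureTheory
open scoped ENNReal NNReal

/-- Auxiliary: a function measurable on a measurable set `S` (in the restricted sense)
has measurable extension-by-zero (indicator). -/
lemma indicator_meas_of_restrict {X β : Type*} [MeasurableSpace X] [MeasurableSpace β] [Zero β]
    {S : Set X} (hS : MeasurableSet S) {φ : X → β} (hφ : Measurable (S.restrict φ)) :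
    Measurable (S.indicator φ) := by
  have he : MeasurableEmbedding ((↑) : S → X) := MeasurableEmbedding.subtype_coe hS
  have h : S.indicator φ = Function.extend ((↑) : S → X) (S.restrict φ) (fun _ => 0) := by
    funext x
    by_cases hx : x ∈ S
    · rw [Set.indicator_of_mem hx]
      have := Subtype.val_injective.extend_apply (S.restrict φ) (fun _ => (0:β)) ⟨x, hx⟩
      simpa [Set.restrict] using this.symm
    · rw [Set.indicator_of_notMem hx, Function.extend_apply']
      rintro ⟨⟨y, hy⟩, rfl⟩; exact hx hy
  rw [h]
  exact he.measurable_extend hφ measurable_const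

/-- If μ₀ has the fixed-point property and the branches of r⁻¹ can be labeled
measurably, then there is a nonnegative measurable Δ with
(R_{μ₀}(V f))(x) = ∑_{r(y)=x} Δ(y) f(y) for μ₀-a.e. x, for every f ∈ L¹(X,μ₀);
here R_{μ₀}(V f) is any integrable ρ with ∫ V·f·(g∘r) dμ₀ = ∫ ρ·g dμ₀ for bounded
measurable g. -/
theorem stmt8 {X : Type*} [MeasurableSpace X] (r : X → X) (hr : Measurable r)
    (hsurj : Function.Surjective r) (hfin : ∀ x, (r ⁻¹' {x}).Finite)
    (c : X → ℕ) (hc : ∀ x, c x = Nat.card (r ⁻¹' {x})) (hcm : Measurable c)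
    (τ : ℕ → X → X)
    (hτfib : ∀ x, r ⁻¹' {x} = (fun i => τ i x) '' {i | 1 ≤ i ∧ i ≤ c x})
    (hτinj : ∀ x, Set.InjOn (fun i => τ i x) {i | 1 ≤ i ∧ i ≤ c x})
    (hτmeas : ∀ i, Measurable (({x | i ≤ c x}).restrict (τ i)))
    (hτim : ∀ i, MeasurableSet (τ i '' {x | i ≤ c x}))
    (V : X → ℝ) (hVm : Measurable V) (hVpos : ∀ x, 0 ≤ V x) (hVbdd : ∃ C, ∀ x, V x ≤ C)
    (μ₀ : Measure X) [IsFiniteMeasure μ₀]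
    (hfp : ∀ f : X → ℝ, Measurable f → (∃ C, ∀ x, |f x| ≤ C) →
      ∫ x, V x * f (r x) ∂μ₀ = ∫ x, f x ∂μ₀) :
    ∃ Δ : X → ℝ, Measurable Δ ∧ (∀ x, 0 ≤ Δ x) ∧
      ∀ f : X → ℝ, Integrable f μ₀ →
        ∀ ρ : X → ℝ, Integrable ρ μ₀ →
          (∀ g : X → ℝ, Measurable g → (∃ C, ∀ x, |g x| ≤ C) →
            ∫ x, V x * f x * g (r x) ∂μ₀ = ∫ x, ρ x * g x ∂μ₀) →
          ∀ᵐ x ∂μ₀, ρ x = ∑ᶠ y ∈ r ⁻¹' {x}, Δ y * f y := by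
  classical
  obtain ⟨C₀, hC₀⟩ := hVbdd
  set C : ℝ := max C₀ 0 with hCdef
  have hVC : ∀ x, V x ≤ C := fun x => le_trans (hC₀ x) (le_max_left _ _)
  have hC0 : (0:ℝ) ≤ C := le_max_right _ _
  -- branch sets
  set A : ℕ → Set X := fun n => {x | n + 1 ≤ c x} with hA
  have hAm : ∀ n, MeasurableSet (A n) := fun n =>
    measurableSet_le measurable_const hcm
  set τ' : ℕ → X → X := fun n => τ (n + 1) with hτ'
  have hτ'meas : ∀ n, Measurable ((A n).restrict (τ' n)) := fun n => hτmeas (n + 1)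
  set B : ℕ → Set X := fun n => τ' n '' A n with hB
  have hBm : ∀ n, MeasurableSet (B n) := fun n => hτim (n + 1)
  have hmem : ∀ n, ∀ x ∈ A n, r (τ' n x) = x := by
    intro n x hx
    have h1 : τ' n x ∈ r ⁻¹' {x} := by
      rw [hτfib]
      exact ⟨n + 1, ⟨Nat.succ_le_succ (Nat.zero_le n), hx⟩, rfl⟩
    simpa using h1
  have hBuniq : ∀ z n m, z ∈ B n → z ∈ B m → n = m := by
    rintro z n m ⟨x, hx, rfl⟩ ⟨y, hy, hzy⟩
    have hxy : x = y := by
      have h1 := hmem n x hx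
      have h2 := hmem m y hy
      rw [hzy, h1] at h2; exact h2
    subst hxy
    have h3 : τ (n+1) x = τ (m+1) x := hzy.symm
    have := hτinj x
      (Set.mem_setOf.2 ⟨Nat.succ_le_succ (Nat.zero_le n), hx⟩)
      (Set.mem_setOf.2 ⟨Nat.succ_le_succ (Nat.zero_le m), hy⟩) h3
    omega
  have hBcover : ∀ z, ∃ n, z ∈ B n := by
    intro z
    have h1 : z ∈ r ⁻¹' {r z} := rfl
    rw [hτfib] at h1
    obtain ⟨i, ⟨hi1, hi2⟩, hiz⟩ := h1
    refine ⟨i - 1, r z, ?_, ?_⟩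
    · show i - 1 + 1 ≤ c (r z); omega
    · show τ' (i - 1) (r z) = z
      simp only [hτ']
      have : i - 1 + 1 = i := by omega
      rw [this]; exact hiz
  -- weighted densities and measures
  set ν : ℕ → X → ℝ≥0 := fun n => (B n).indicator (fun y => (V y).toNNReal) with hνdef
  have hνm : ∀ n, Measurable (ν n) := fun n =>
    (measurable_real_toNNReal.comp hVm).indicator (hBm n)
  set w : ℕ → X → ℝ≥0∞ := fun n y => (ν n y : ℝ≥0∞) with hwdef
  have hwm : ∀ n, Measurable (w n) := fun n => (hνm n).coe_nnreal_ennreal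
  have hwval : ∀ n, ∀ y ∈ B n, w n y = ENNReal.ofReal (V y) := by
    intro n y hy
    simp only [hwdef, hνdef, Set.indicator_of_mem hy, ENNReal.ofReal]
  have hwz : ∀ n, ∀ y ∉ B n, w n y = 0 := by
    intro n y hy
    simp only [hwdef, hνdef, Set.indicator_of_notMem hy, ENNReal.coe_zero]
  have hwle : ∀ n y, w n y ≤ ENNReal.ofReal C := by
    intro n y
    by_cases hy : y ∈ B n
    · rw [hwval n y hy]; exact ENNReal.ofReal_le_ofReal (hVC y)
    · rw [hwz n y hy]; exact zero_le
  set κ : ℕ → Measure X := fun n => (μ₀.withDensity (w n)).map r with hκdef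
  have hL1 : ∀ n (g : X → ℝ≥0∞), Measurable g →
      ∫⁻ z, g z ∂(κ n) = ∫⁻ y, w n y * g (r y) ∂μ₀ := by
    intro n g hg
    calc ∫⁻ z, g z ∂(κ n) = ∫⁻ y, g (r y) ∂(μ₀.withDensity (w n)) := lintegral_map hg hr
      _ = ∫⁻ y, (w n * fun y => g (r y)) y ∂μ₀ :=
          lintegral_withDensity_eq_lintegral_mul μ₀ (hwm n) (hg.comp hr)
      _ = ∫⁻ y, w n y * g (r y) ∂μ₀ := rfl
  have hκfin : ∀ n, IsFiniteMeasure (κ n) := by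
    intro n
    constructor
    have h1 : (κ n) Set.univ = ∫⁻ y, w n y * (fun _ => (1:ℝ≥0∞)) (r y) ∂μ₀ := by
      rw [← hL1 n (fun _ => 1) measurable_const]; simp
    simp only [mul_one] at h1 ⊢
    rw [h1]
    calc ∫⁻ y, w n y ∂μ₀ ≤ ∫⁻ _, ENNReal.ofReal C ∂μ₀ := by
          refine lintegral_mono fun y => ?_; exact hwle n y
      _ < ⊤ := by
          rw [lintegral_const]
          exact ENNReal.mul_lt_top ENNReal.ofReal_lt_top (measure_lt_top μ₀ _)
  -- absolute continuity
  have hnull : ∀ E : Set X, MeasurableSet E → μ₀ E = 0 →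
      ∀ᵐ y ∂μ₀, V y * E.indicator (fun _ => (1:ℝ)) (r y) = 0 := by
    intro E hE hE0
    have hgm : Measurable (E.indicator (fun _ => (1:ℝ))) := measurable_const.indicator hE
    have hgb : ∃ C, ∀ x, |E.indicator (fun _ => (1:ℝ)) x| ≤ C := by
      refine ⟨1, fun x => ?_⟩
      by_cases hx : x ∈ E <;> simp [Set.indicator_of_mem, Set.indicator_of_notMem, hx]
    have h0 : ∫ x, V x * E.indicator (fun _ => (1:ℝ)) (r x) ∂μ₀ = 0 := by
      rw [hfp _ hgm hgb]
      rw [integral_indicator hE]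
      simp [Measure.restrict_eq_zero.mpr hE0]
    have hnn : 0 ≤ᵐ[μ₀] fun x => V x * E.indicator (fun _ => (1:ℝ)) (r x) := by
      refine Filter.Eventually.of_forall fun x => ?_
      refine mul_nonneg (hVpos x) ?_
      by_cases hx : r x ∈ E <;> simp [Set.indicator_of_mem, Set.indicator_of_notMem, hx]
    have hint : Integrable (fun x => V x * E.indicator (fun _ => (1:ℝ)) (r x)) μ₀ := by
      refine Integrable.mono' (integrable_const C) ?_ ?_
      · exact (hVm.mul (hgm.comp hr)).aestronglyMeasurable
      · refine Filter.Eventually.of_forall fun x => ?_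
        rw [Real.norm_eq_abs, abs_mul]
        by_cases hx : r x ∈ E
        · simp only [Set.indicator_of_mem hx]
          simpa [abs_of_nonneg (hVpos x)] using hVC x
        · simp only [Set.indicator_of_notMem hx]
          simpa using hC0
    exact (integral_eq_zero_iff_of_nonneg_ae hnn hint).mp h0
  have hac : ∀ n, κ n ≪ μ₀ := by
    intro n
    refine Measure.AbsolutelyContinuous.mk fun E hE hE0 => ?_
    have h1 : (κ n) E = ∫⁻ y, w n y * (E.indicator (fun _ => (1:ℝ≥0∞)) (r y)) ∂μ₀ := by
      rw [← hL1 n _ (measurable_const.indicator hE)]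
      exact (lintegral_indicator_one hE).symm
    rw [h1]
    have h2 : ∀ᵐ y ∂μ₀, w n y * (E.indicator (fun _ => (1:ℝ≥0∞)) (r y)) = 0 := by
      filter_upwards [hnull E hE hE0] with y hy
      by_cases hry : r y ∈ E
      · have hV0 : V y = 0 := by
          simp only [Set.indicator_of_mem hry, mul_one] at hy; exact hy
        by_cases hyB : y ∈ B n
        · rw [hwval n y hyB, hV0]; simp
        · rw [hwz n y hyB]; simp
      · simp [Set.indicator_of_notMem hry]
    rw [lintegral_congr_ae h2, lintegral_zero]
  -- Radon–Nikodym derivatives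
  set D : ℕ → X → ℝ≥0∞ := fun n => (κ n).rnDeriv μ₀ with hDdef
  have hDm : ∀ n, Measurable (D n) := fun n => Measure.measurable_rnDeriv _ _
  have hκeq : ∀ n, μ₀.withDensity (D n) = κ n := by
    intro n
    haveI := hκfin n
    exact Measure.withDensity_rnDeriv_eq _ _ (hac n)
  have hL2 : ∀ n (g : X → ℝ≥0∞), Measurable g →
      ∫⁻ z, g z ∂(κ n) = ∫⁻ x, D n x * g x ∂μ₀ := by
    intro n g hg
    rw [← hκeq n]
    exact lintegral_withDensity_eq_lintegral_mul μ₀ (hDm n) hg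
  -- the function Δ
  set Δ : X → ℝ := fun z => (∑' n, (B n).indicator (fun y => D n (r y)) z).toReal with hΔdef
  have hΔm : Measurable Δ := by
    apply Measurable.ennreal_toReal
    exact Measurable.ennreal_tsum fun n => ((hDm n).comp hr).indicator (hBm n)
  have hΔpos : ∀ z, 0 ≤ Δ z := fun z => ENNReal.toReal_nonneg
  have hΔval : ∀ n, ∀ x ∈ A n, Δ (τ' n x) = (D n x).toReal := by
    intro n x hx
    have hz : τ' n x ∈ B n := ⟨x, hx, rfl⟩
    have hrz : r (τ' n x) = x := hmem n x hx
    have h1 : (∑' m, (B m).indicator (fun y => D m (r y)) (τ' n x))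
        = (B n).indicator (fun y => D n (r y)) (τ' n x) := by
      refine tsum_eq_single n fun m hm => ?_
      refine Set.indicator_of_notMem (fun hmem' => hm ?_) _
      exact hBuniq _ m n hmem' hz
    rw [hΔdef]
    simp only [h1, Set.indicator_of_mem hz, hrz]
  refine ⟨Δ, hΔm, hΔpos, ?_⟩
  intro f hf ρ hρint hρ
  -- replace f by a measurable representative
  set f' : X → ℝ := hf.1.mk f with hf'def
  have hf'm : Measurable f' := hf.1.stronglyMeasurable_mk.measurable
  have hff' : f =ᵐ[μ₀] f' := hf.1.ae_eq_mk
  have hf'int : Integrable f' μ₀ := hf.congr hff'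
  have hρ' : ∀ g : X → ℝ, Measurable g → (∃ C, ∀ x, |g x| ≤ C) →
      ∫ x, V x * f' x * g (r x) ∂μ₀ = ∫ x, ρ x * g x ∂μ₀ := by
    intro g hgm hgb
    rw [← hρ g hgm hgb]
    apply integral_congr_ae
    filter_upwards [hff'] with x hx
    rw [hx]
  -- the branchwise summands
  set Ffun : ℕ → X → ℝ :=
    fun n => (A n).indicator (fun x => (D n x).toReal * f' (τ' n x)) with hFdef
  have hFm : ∀ n, Measurable (Ffun n) := by
    intro n
    apply indicator_meas_of_restrict (hAm n)
    have heq : (A n).restrict (fun x => (D n x).toReal * f' (τ' n x))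
        = fun p : (A n) => (D n (p : X)).toReal * f' ((A n).restrict (τ' n) p) := rfl
    rw [heq]
    exact (((hDm n).ennreal_toReal).comp measurable_subtype_coe).mul (hf'm.comp (hτ'meas n))
  set h : X → ℝ := fun x => ∑' n, Ffun n x with hhdef
  have hFsupp : ∀ x, ∀ n ∉ Finset.range (c x), Ffun n x = 0 := by
    intro x n hn
    have hxA : x ∉ A n := by
      simp only [Finset.mem_range, not_lt] at hn
      intro hx
      have : n + 1 ≤ c x := hx
      omega
    exact Set.indicator_of_notMem hxA _
  have hfinsum : ∀ x, h x = ∑ n ∈ Finset.range (c x), Ffun n x := fun x =>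
    tsum_eq_sum (hFsupp x)
  have hhm : Measurable h := by
    have hpart : ∀ N, Measurable (fun x => ∑ n ∈ Finset.range N, Ffun n x) := fun N =>
      Finset.measurable_sum _ (fun n _ => hFm n)
    apply measurable_of_tendsto_metrizable hpart
    rw [tendsto_pi_nhds]
    intro x
    rw [hfinsum x]
    refine tendsto_atTop_of_eventually_const (i₀ := c x) fun N hN => ?_
    exact (Finset.sum_subset (Finset.range_subset_range.2 hN)
      (fun n _ hn => hFsupp x n hn)).symm
  -- the ℓ¹-type bound
  have hbound : ∀ n, ∫⁻ x, (‖Ffun n x‖₊ : ℝ≥0∞) ∂μ₀ ≤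
      ∫⁻ y, (B n).indicator (fun y => ENNReal.ofReal C * (‖f' y‖₊ : ℝ≥0∞)) y ∂μ₀ := by
    intro n
    set Hn : X → ℝ≥0∞ := (A n).indicator (fun x => (‖f' (τ' n x)‖₊ : ℝ≥0∞)) with hHndef
    have hHm : Measurable Hn := by
      apply indicator_meas_of_restrict (hAm n)
      have heq : (A n).restrict (fun x => (‖f' (τ' n x)‖₊ : ℝ≥0∞))
          = fun p : (A n) => (‖f' ((A n).restrict (τ' n) p)‖₊ : ℝ≥0∞) := rfl
      rw [heq]
      exact (measurable_coe_nnreal_ennreal.comp hf'm.nnnorm).comp (hτ'meas n)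
    have key : ∀ x, (‖Ffun n x‖₊ : ℝ≥0∞) ≤ D n x * Hn x := by
      intro x
      by_cases hx : x ∈ A n
      · rw [hFdef]
        simp only [Set.indicator_of_mem hx, hHndef]
        rw [nnnorm_mul, ENNReal.coe_mul]
        refine mul_le_mul' ?_ le_rfl
        have h1 : (‖(D n x).toReal‖₊ : ℝ≥0∞) = ENNReal.ofReal ((D n x).toReal) :=
          Real.enorm_eq_ofReal ENNReal.toReal_nonneg
        rw [h1]
        exact ENNReal.ofReal_toReal_le
      · rw [hFdef]
        simp [Set.indicator_of_notMem hx]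
    calc ∫⁻ x, (‖Ffun n x‖₊ : ℝ≥0∞) ∂μ₀ ≤ ∫⁻ x, D n x * Hn x ∂μ₀ := lintegral_mono key
      _ = ∫⁻ z, Hn z ∂(κ n) := (hL2 n Hn hHm).symm
      _ = ∫⁻ y, w n y * Hn (r y) ∂μ₀ := hL1 n Hn hHm
      _ ≤ ∫⁻ y, (B n).indicator (fun y => ENNReal.ofReal C * (‖f' y‖₊ : ℝ≥0∞)) y ∂μ₀ := by
          refine lintegral_mono fun y => ?_
          by_cases hy : y ∈ B n
          · obtain ⟨x, hx, rfl⟩ := hy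
            have hry : r (τ' n x) = x := hmem n x hx
            have hyB : τ' n x ∈ B n := ⟨x, hx, rfl⟩
            rw [Set.indicator_of_mem hyB, hry, hHndef, Set.indicator_of_mem hx]
            exact mul_le_mul' (hwle n _) le_rfl
          · rw [hwz n y hy, Set.indicator_of_notMem hy, zero_mul]
  have hpartition : ∀ (ψ : X → ℝ≥0∞), ∀ y, (∑' n, (B n).indicator ψ y) = ψ y := by
    intro ψ y
    obtain ⟨n₀, hn₀⟩ := hBcover y
    rw [tsum_eq_single n₀ (fun m hm => Set.indicator_of_notMem
      (fun hmem' => hm (hBuniq y m n₀ hmem' hn₀)) _)]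
    exact Set.indicator_of_mem hn₀ _
  have hsumF : ∑' n, ∫⁻ x, (‖Ffun n x‖₊ : ℝ≥0∞) ∂μ₀ ≠ ⊤ := by
    have h1 : ∑' n, ∫⁻ x, (‖Ffun n x‖₊ : ℝ≥0∞) ∂μ₀ ≤
        ∑' n, ∫⁻ y, (B n).indicator (fun y => ENNReal.ofReal C * (‖f' y‖₊ : ℝ≥0∞)) y ∂μ₀ :=
      ENNReal.tsum_le_tsum hbound
    have hφm : Measurable (fun y => ENNReal.ofReal C * (‖f' y‖₊ : ℝ≥0∞)) :=
      measurable_const.mul (measurable_coe_nnreal_ennreal.comp hf'm.nnnorm)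
    have h2 : ∑' n, ∫⁻ y, (B n).indicator (fun y => ENNReal.ofReal C * (‖f' y‖₊ : ℝ≥0∞)) y ∂μ₀
        = ∫⁻ y, ENNReal.ofReal C * (‖f' y‖₊ : ℝ≥0∞) ∂μ₀ := by
      rw [← lintegral_tsum (fun n => (hφm.indicator (hBm n)).aemeasurable)]
      exact lintegral_congr fun y => hpartition _ y
    have h3 : ∫⁻ y, ENNReal.ofReal C * (‖f' y‖₊ : ℝ≥0∞) ∂μ₀ < ⊤ := by
      rw [lintegral_const_mul' _ _ ENNReal.ofReal_ne_top]
      exact ENNReal.mul_lt_top ENNReal.ofReal_lt_top hf'int.2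
    exact ne_top_of_le_ne_top (ne_top_of_le_ne_top h3.ne h2.le) h1
  have hnormsum : ∀ x, (‖h x‖₊ : ℝ≥0∞) ≤ ∑' n, (‖Ffun n x‖₊ : ℝ≥0∞) := by
    intro x
    rw [hfinsum x]
    calc (‖∑ n ∈ Finset.range (c x), Ffun n x‖₊ : ℝ≥0∞)
        ≤ (↑(∑ n ∈ Finset.range (c x), ‖Ffun n x‖₊) : ℝ≥0∞) :=
          ENNReal.coe_le_coe.2 (nnnorm_sum_le _ _)
      _ = ∑ n ∈ Finset.range (c x), (‖Ffun n x‖₊ : ℝ≥0∞) := ENNReal.coe_finset_sum _ _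
      _ ≤ ∑' n, (‖Ffun n x‖₊ : ℝ≥0∞) := ENNReal.sum_le_tsum _
  have hhint : Integrable h μ₀ := by
    refine ⟨hhm.aestronglyMeasurable, ?_⟩
    show ∫⁻ x, (‖h x‖₊ : ℝ≥0∞) ∂μ₀ < ⊤
    calc ∫⁻ x, (‖h x‖₊ : ℝ≥0∞) ∂μ₀ ≤ ∫⁻ x, ∑' n, (‖Ffun n x‖₊ : ℝ≥0∞) ∂μ₀ :=
          lintegral_mono hnormsum
      _ = ∑' n, ∫⁻ x, (‖Ffun n x‖₊ : ℝ≥0∞) ∂μ₀ :=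
          lintegral_tsum fun n => (measurable_coe_nnreal_ennreal.comp
            (hFm n).nnnorm).aemeasurable
      _ < ⊤ := hsumF.lt_top
  -- real-valued partition identity
  have hpartR : ∀ (ψ : X → ℝ), ∀ y, (∑' n, (B n).indicator ψ y) = ψ y := by
    intro ψ y
    obtain ⟨n₀, hn₀⟩ := hBcover y
    rw [tsum_eq_single n₀ (fun m hm => Set.indicator_of_notMem
      (fun hmem' => hm (hBuniq y m n₀ hmem' hn₀)) _)]
    exact Set.indicator_of_mem hn₀ _
  -- the set-integral identity
  have hsetint : ∀ E : Set X, MeasurableSet E → ∫ x in E, ρ x ∂μ₀ = ∫ x in E, h x ∂μ₀ := by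
    intro E hE
    set g : X → ℝ := E.indicator (fun _ => (1:ℝ)) with hgdef
    have hgm : Measurable g := measurable_const.indicator hE
    have hgb : ∀ x, |g x| ≤ 1 := by
      intro x; by_cases hx : x ∈ E <;> simp [hgdef, Set.indicator_of_mem,
        Set.indicator_of_notMem, hx]
    have hgnn : ∀ x, (‖g x‖₊ : ℝ≥0∞) ≤ 1 := by
      intro x
      have h1 : (‖g x‖₊ : ℝ) ≤ 1 := by
        rw [coe_nnnorm, Real.norm_eq_abs]; exact hgb x
      exact_mod_cast h1
    have hmulg : ∀ (u : X → ℝ) x, u x * g x = E.indicator u x := by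
      intro u x
      by_cases hx : x ∈ E <;> simp [hgdef, Set.indicator_of_mem, Set.indicator_of_notMem, hx]
    have hA1 : ∫ x in E, ρ x ∂μ₀ = ∫ x, ρ x * g x ∂μ₀ := by
      rw [← integral_indicator hE]
      exact integral_congr_ae (Filter.Eventually.of_forall fun x => (hmulg ρ x).symm)
    set φ : X → ℝ := fun y => V y * f' y * g (r y) with hφdef
    have hφm : Measurable φ := (hVm.mul hf'm).mul (hgm.comp hr)
    have hφbd : ∀ y, ‖φ y‖ ≤ C * ‖f' y‖ := by
      intro y
      rw [hφdef]
      simp only [norm_mul]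
      calc ‖V y‖ * ‖f' y‖ * ‖g (r y)‖ ≤ ‖V y‖ * ‖f' y‖ * 1 := by
            refine mul_le_mul_of_nonneg_left ?_ (by positivity)
            simpa [Real.norm_eq_abs] using hgb (r y)
        _ = ‖V y‖ * ‖f' y‖ := mul_one _
        _ ≤ C * ‖f' y‖ := by
            refine mul_le_mul_of_nonneg_right ?_ (norm_nonneg _)
            rw [Real.norm_eq_abs, abs_of_nonneg (hVpos y)]; exact hVC y
    have hφint : Integrable φ μ₀ :=
      (hf'int.norm.const_mul C).mono' hφm.aestronglyMeasurable
        (Filter.Eventually.of_forall hφbd)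
    have hA2 : ∫ x, ρ x * g x ∂μ₀ = ∫ y, φ y ∂μ₀ := (hρ' g hgm ⟨1, hgb⟩).symm
    -- decompose into branches
    have hnn_ind : ∀ (u : X → ℝ) n y,
        (‖(B n).indicator u y‖₊ : ℝ≥0∞) = (B n).indicator (fun y => (‖u y‖₊ : ℝ≥0∞)) y := by
      intro u n y
      by_cases hy : y ∈ B n <;>
        simp [Set.indicator_of_mem, Set.indicator_of_notMem, hy]
    have hB1 : ∫ y, φ y ∂μ₀ = ∑' n, ∫ y, (B n).indicator φ y ∂μ₀ := by
      have hlt : ∑' n, ∫⁻ y, (‖(B n).indicator φ y‖₊ : ℝ≥0∞) ∂μ₀ ≠ ⊤ := by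
        have hφnn : Measurable (fun y => (‖φ y‖₊ : ℝ≥0∞)) :=
          measurable_coe_nnreal_ennreal.comp hφm.nnnorm
        have heq : ∑' n, ∫⁻ y, (‖(B n).indicator φ y‖₊ : ℝ≥0∞) ∂μ₀
            = ∫⁻ y, (‖φ y‖₊ : ℝ≥0∞) ∂μ₀ :=
          calc ∑' n, ∫⁻ y, (‖(B n).indicator φ y‖₊ : ℝ≥0∞) ∂μ₀
              = ∑' n, ∫⁻ y, (B n).indicator (fun y => (‖φ y‖₊ : ℝ≥0∞)) y ∂μ₀ :=
                tsum_congr fun n => lintegral_congr fun y => hnn_ind φ n y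
            _ = ∫⁻ y, ∑' n, (B n).indicator (fun y => (‖φ y‖₊ : ℝ≥0∞)) y ∂μ₀ :=
                (lintegral_tsum fun n => (hφnn.indicator (hBm n)).aemeasurable).symm
            _ = ∫⁻ y, (‖φ y‖₊ : ℝ≥0∞) ∂μ₀ := lintegral_congr fun y => hpartition _ y
        rw [heq]
        exact hφint.2.ne
      have hdec : ∫ y, φ y ∂μ₀ = ∫ y, ∑' n, (B n).indicator φ y ∂μ₀ :=
        integral_congr_ae (Filter.Eventually.of_forall fun y => (hpartR φ y).symm)
      rw [hdec]
      exact integral_tsum (fun n => (hφm.indicator (hBm n)).aestronglyMeasurable) hlt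
    -- per-branch computation
    have hCkey : ∀ n, ∫ y, (B n).indicator φ y ∂μ₀ = ∫ x, Ffun n x * g x ∂μ₀ := by
      intro n
      set Gn : X → ℝ := fun x => (A n).indicator (fun x => f' (τ' n x)) x * g x with hGdef
      have hGm : Measurable Gn := by
        refine (indicator_meas_of_restrict (hAm n) ?_).mul hgm
        have heq : (A n).restrict (fun x => f' (τ' n x))
            = fun p : (A n) => f' ((A n).restrict (τ' n) p) := rfl
        rw [heq]
        exact hf'm.comp (hτ'meas n)
      have hνval : ∀ y, y ∈ B n → ((ν n y : ℝ≥0) : ℝ) = V y := by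
        intro y hy
        simp only [hνdef, Set.indicator_of_mem hy]
        exact Real.coe_toNNReal _ (hVpos y)
      have hνzero : ∀ y, y ∉ B n → ν n y = 0 := by
        intro y hy; simp only [hνdef]; exact Set.indicator_of_notMem hy _
      have hstep1 : ∀ y, (B n).indicator φ y = ν n y • Gn (r y) := by
        intro y
        by_cases hy : y ∈ B n
        · obtain ⟨x, hx, rfl⟩ := hy
          have hry : r (τ' n x) = x := hmem n x hx
          have hyB : τ' n x ∈ B n := ⟨x, hx, rfl⟩
          rw [Set.indicator_of_mem hyB, NNReal.smul_def, hνval _ hyB]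
          simp only [hGdef, hφdef, hry, Set.indicator_of_mem hx, smul_eq_mul]
          ring
        · rw [Set.indicator_of_notMem hy, hνzero y hy, zero_smul]
      have hstep2 : ∫ y, ν n y • Gn (r y) ∂μ₀ = ∫ z, Gn z ∂(κ n) := by
        rw [hκdef]
        rw [integral_map hr.aemeasurable]
        · exact (integral_withDensity_eq_integral_smul (hνm n) (fun y => Gn (r y))).symm
        · exact hGm.aestronglyMeasurable
      have hstep3 : ∫ z, Gn z ∂(κ n) = ∫ x, (D n x).toReal • Gn x ∂μ₀ := by
        haveI := hκfin n
        exact (integral_rnDeriv_smul (hac n)).symm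
      have hstep4 : ∀ x, (D n x).toReal • Gn x = Ffun n x * g x := by
        intro x
        rw [hGdef, hFdef, smul_eq_mul]
        by_cases hx : x ∈ A n
        · simp only [Set.indicator_of_mem hx]; ring
        · simp only [Set.indicator_of_notMem hx]; ring
      calc ∫ y, (B n).indicator φ y ∂μ₀ = ∫ y, ν n y • Gn (r y) ∂μ₀ :=
            integral_congr_ae (Filter.Eventually.of_forall hstep1)
        _ = ∫ z, Gn z ∂(κ n) := hstep2
        _ = ∫ x, (D n x).toReal • Gn x ∂μ₀ := hstep3
        _ = ∫ x, Ffun n x * g x ∂μ₀ :=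
            integral_congr_ae (Filter.Eventually.of_forall hstep4)
    -- reassemble
    have hD1 : ∑' n, ∫ x, Ffun n x * g x ∂μ₀ = ∫ x, h x * g x ∂μ₀ := by
      have hlt : ∑' n, ∫⁻ x, (‖Ffun n x * g x‖₊ : ℝ≥0∞) ∂μ₀ ≠ ⊤ := by
        refine ne_top_of_le_ne_top hsumF (ENNReal.tsum_le_tsum fun n => lintegral_mono fun x => ?_)
        rw [nnnorm_mul, ENNReal.coe_mul]
        calc (‖Ffun n x‖₊ : ℝ≥0∞) * ‖g x‖₊ ≤ (‖Ffun n x‖₊ : ℝ≥0∞) * 1 :=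
              mul_le_mul' le_rfl (hgnn x)
          _ = ‖Ffun n x‖₊ := mul_one _
      rw [← integral_tsum (f := fun n x => Ffun n x * g x)
        (fun n => ((hFm n).mul hgm).aestronglyMeasurable) hlt]
      refine integral_congr_ae (Filter.Eventually.of_forall fun x => ?_)
      rw [hhdef]
      exact tsum_mul_right
    have hA3 : ∫ x, h x * g x ∂μ₀ = ∫ x in E, h x ∂μ₀ := by
      rw [← integral_indicator hE]
      exact integral_congr_ae (Filter.Eventually.of_forall fun x => hmulg h x)
    rw [hA1, hA2, hB1, tsum_congr hCkey, hD1, hA3]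
  have hmain : ρ =ᵐ[μ₀] h :=
    Integrable.ae_eq_of_forall_setIntegral_eq ρ h hρint hhint
      (fun s hs _ => hsetint s hs)
  -- identify h with the fiberwise finsum for f'
  have hC1 : ∀ x, (∑ᶠ y ∈ r ⁻¹' {x}, Δ y * f' y) = h x := by
    intro x
    have hset : {i | 1 ≤ i ∧ i ≤ c x} = ↑(Finset.Icc 1 (c x)) := by
      ext i; simp [Finset.mem_Icc]
    calc ∑ᶠ y ∈ r ⁻¹' {x}, Δ y * f' y
        = ∑ᶠ i ∈ {i | 1 ≤ i ∧ i ≤ c x}, Δ (τ i x) * f' (τ i x) := by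
          rw [hτfib x]
          exact finsum_mem_image (hτinj x)
      _ = ∑ i ∈ Finset.Icc 1 (c x), Δ (τ i x) * f' (τ i x) := by
          rw [hset]; exact finsum_mem_coe_finset _ _
      _ = ∑ n ∈ Finset.range (c x), Δ (τ' n x) * f' (τ' n x) := by
          refine Finset.sum_nbij' (fun a => a - 1) (fun n => n + 1) ?_ ?_ ?_ ?_ ?_
          · intro a ha
            simp only [Finset.mem_Icc] at ha
            simp only [Finset.mem_range]; omega
          · intro n hn
            simp only [Finset.mem_range] at hn
            simp only [Finset.mem_Icc]; omega
          · intro a ha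
            simp only [Finset.mem_Icc] at ha; omega
          · intro n _; omega
          · intro a ha
            simp only [Finset.mem_Icc] at ha
            have hii : a - 1 + 1 = a := by omega
            simp only [hτ', hii]
      _ = ∑ n ∈ Finset.range (c x), Ffun n x := by
          refine Finset.sum_congr rfl fun n hn => ?_
          have hxA : x ∈ A n := by
            show n + 1 ≤ c x
            simp only [Finset.mem_range] at hn; omega
          rw [hΔval n x hxA]
          simp only [hFdef, Set.indicator_of_mem hxA]
      _ = h x := (hfinsum x).symm
  -- null-set correction, from f' back to f
  set N : Set X := toMeasurable μ₀ {y | f y ≠ f' y} with hNdef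
  have hNm : MeasurableSet N := measurableSet_toMeasurable _ _
  have hN0 : μ₀ N = 0 := by
    rw [hNdef, measure_toMeasurable]
    exact hff'
  have hsub : {y | f y ≠ f' y} ⊆ N := subset_toMeasurable _ _
  set In : ℕ → X → ℝ≥0∞ :=
    fun n => (A n).indicator (fun x => N.indicator (fun _ => (1:ℝ≥0∞)) (τ' n x)) with hIdef
  have hIm : ∀ n, Measurable (In n) := by
    intro n
    apply indicator_meas_of_restrict (hAm n)
    have heq : (A n).restrict (fun x => N.indicator (fun _ => (1:ℝ≥0∞)) (τ' n x))
        = fun p : (A n) => N.indicator (fun _ => (1:ℝ≥0∞)) ((A n).restrict (τ' n) p) := rfl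
    rw [heq]
    exact (measurable_const.indicator hNm).comp (hτ'meas n)
  have hterm0 : ∀ n, ∫⁻ x, D n x * In n x ∂μ₀ = 0 := by
    intro n
    have h1 : ∫⁻ x, D n x * In n x ∂μ₀ = ∫⁻ z, In n z ∂(κ n) := (hL2 n (In n) (hIm n)).symm
    have h2 : ∫⁻ z, In n z ∂(κ n) = ∫⁻ y, w n y * In n (r y) ∂μ₀ := hL1 n (In n) (hIm n)
    have h3 : ∀ y, w n y * In n (r y) ≤
        ENNReal.ofReal C * N.indicator (fun _ => (1:ℝ≥0∞)) y := by
      intro y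
      by_cases hy : y ∈ B n
      · obtain ⟨x, hx, rfl⟩ := hy
        have hry : r (τ' n x) = x := hmem n x hx
        simp only [hIdef, hry, Set.indicator_of_mem hx]
        exact mul_le_mul' (hwle n _) le_rfl
      · rw [hwz n y hy, zero_mul]; exact zero_le
    have h4 : ∫⁻ y, ENNReal.ofReal C * N.indicator (fun _ => (1:ℝ≥0∞)) y ∂μ₀ = 0 := by
      have h5 : ∫⁻ a, N.indicator (fun _ => (1:ℝ≥0∞)) a ∂μ₀ = μ₀ N := lintegral_indicator_one hNm
      rw [lintegral_const_mul' _ _ ENNReal.ofReal_ne_top, h5, hN0, mul_zero]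
    rw [h1, h2]
    exact le_antisymm ((lintegral_mono h3).trans h4.le) zero_le
  have hΨ : ∀ᵐ x ∂μ₀, (∑' n, D n x * In n x) = 0 := by
    have hm : Measurable (fun x => ∑' n, D n x * In n x) :=
      Measurable.ennreal_tsum fun n => (hDm n).mul (hIm n)
    have hz : ∫⁻ x, (∑' n, D n x * In n x) ∂μ₀ = 0 := by
      rw [lintegral_tsum (f := fun n x => D n x * In n x)
        (fun n => ((hDm n).mul (hIm n)).aemeasurable)]
      simp [hterm0]
    have := (lintegral_eq_zero_iff hm).mp hz
    filter_upwards [this] with x hx using hx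
  have hNull : ∀ᵐ x ∂μ₀,
      (∑ᶠ y ∈ r ⁻¹' {x}, Δ y * f y) = ∑ᶠ y ∈ r ⁻¹' {x}, Δ y * f' y := by
    filter_upwards [hΨ] with x hx
    refine finsum_mem_congr rfl fun y hy => ?_
    by_cases hyN : y ∈ N
    · -- here Δ y = 0
      have hy' : y ∈ (fun i => τ i x) '' {i | 1 ≤ i ∧ i ≤ c x} := by
        rw [← hτfib]; exact hy
      obtain ⟨i, ⟨hi1, hi2⟩, rfl⟩ := hy'
      have hxA : x ∈ A (i - 1) := by show i - 1 + 1 ≤ c x; omega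
      have hτeq : τ' (i - 1) x = τ i x := by
        simp only [hτ']
        congr 1; omega
      have hDzero : D (i - 1) x * In (i - 1) x = 0 := ENNReal.tsum_eq_zero.mp hx (i - 1)
      have hIn1 : In (i - 1) x = 1 := by
        simp only [hIdef, Set.indicator_of_mem hxA, hτeq]
        exact Set.indicator_of_mem hyN _
      have hD0 : D (i - 1) x = 0 := by rwa [hIn1, mul_one] at hDzero
      have hΔ0 : Δ (τ i x) = 0 := by
        rw [← hτeq, hΔval (i - 1) x hxA, hD0]; simp
      simp only [hΔ0, zero_mul]
    · have hfy : f y = f' y := by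
        by_contra hne; exact hyN (hsub hne)
      rw [hfy]
  -- conclusion
  filter_upwards [hmain, hNull] with x h1 h2
  rw [h1, ← hC1 x]
  exact h2.symm
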